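/- arXiv:1504.05611 — 10 statements merged into one kernel-verified Lean document; each statement's English description precedes it below -/
import Mathlib

section
/- Let E₀ be a continuum (nonempty compact connected set) in a compact Hausdorff space, let E₁ be a nonempty closed subset of E₀, and let C be a connected component of E₀ \ E₁. Then the closure of C meets E₁. -/
open Set

/-- Šura-Bura: in a compact Hausdorff space, a connected component contained in an
open set is contained in a clopen set contained in that open set. -/
lemma exists_isClopen_of_connectedComponent_subset {α : Type*} [TopologicalSpace α]
    [CompactSpace α] [T2Space α] {x : α} {U : Set α} (hU : IsOpen U)
    (h : connectedComponent x ⊆ U) :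
    ∃ V : Set α, IsClopen V ∧ connectedComponent x ⊆ V ∧ V ⊆ U := by
  let N := { s : Set α // IsClopen s ∧ x ∈ s }
  haveI : Nonempty N := ⟨⟨univ, isClopen_univ, mem_univ x⟩⟩
  have hNcl : ∀ s : N, IsClosed s.val := fun s => s.property.1.1
  have hdir : Directed (· ⊇ ·) fun s : N => s.val := by
    rintro ⟨s, hs, hxs⟩ ⟨t, ht, hxt⟩
    exact ⟨⟨s ∩ t, hs.inter ht, ⟨hxs, hxt⟩⟩, inter_subset_left, inter_subset_right⟩
  have hiInter : ⋂ s : N, s.val = connectedComponent x :=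
    (connectedComponent_eq_iInter_isClopen x).symm
  have h_nhd : ∀ y ∈ ⋂ s : N, s.val, U ∈ nhds y := fun y hy => by
    rw [hiInter] at hy
    exact hU.mem_nhds (h hy)
  obtain ⟨s, hsU⟩ := exists_subset_nhds_of_compactSpace hdir hNcl h_nhd
  refine ⟨s.val, s.property.1, ?_, hsU⟩
  rw [connectedComponent_eq_iInter_isClopen]
  exact iInter_subset (fun s : N => s.val) s

/-- Boundary bumping lemma: if `E₀` is a continuum in a compact Hausdorff space, `E₁` a
nonempty closed subset of `E₀`, and `C` a connected component of `E₀ \ E₁`, then the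
closure of `C` meets `E₁`. -/
theorem closure_component_meets (X : Type*) [TopologicalSpace X] [CompactSpace X]
    [T2Space X] (E₀ E₁ C : Set X)
    (h₀ : IsCompact E₀) (h₀c : IsConnected E₀)
    (h₁ : IsClosed E₁) (h₁ne : E₁.Nonempty) (h₁sub : E₁ ⊆ E₀)
    (hC : ∃ x ∈ E₀ \ E₁, C = connectedComponentIn (E₀ \ E₁) x) :
    (closure C ∩ E₁).Nonempty := by
  obtain ⟨x, hx, rfl⟩ := hC
  set A : Set X := E₀ \ E₁ with hA
  set C : Set X := connectedComponentIn A x with hCdef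
  by_contra hcon
  rw [not_nonempty_iff_eq_empty] at hcon
  have hCsub : C ⊆ A := connectedComponentIn_subset A x
  have hCconn : IsPreconnected C := isPreconnected_connectedComponentIn
  have hxC : x ∈ C := mem_connectedComponentIn hx
  -- closure C ⊆ A, hence C is closed (equal to its closure)
  have hclA : closure C ⊆ A := by
    intro y hy
    have hyE₀ : y ∈ E₀ := h₀.isClosed.closure_subset_iff.mpr
      (hCsub.trans diff_subset) hy
    have : y ∉ E₁ := fun hyE₁ => by
      have : y ∈ closure C ∩ E₁ := ⟨hy, hyE₁⟩
      rw [hcon] at this; exact this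
    exact ⟨hyE₀, this⟩
  have hCclosed : IsClosed C := by
    have h1 : closure C ⊆ C :=
      hCconn.closure.subset_connectedComponentIn (subset_closure hxC) hclA
    exact isClosed_of_closure_subset h1
  have hCcompact : IsCompact C := hCclosed.isCompact
  -- separate C from E₁
  have hdisj : Disjoint C E₁ := disjoint_left.mpr fun y hyC hyE₁ => (hCsub hyC).2 hyE₁
  obtain ⟨U, V, hUo, hVo, hCU, hE₁V, hUV⟩ :=
    SeparatedNhds.of_isCompact_isCompact hCcompact (h₀.of_isClosed_subset h₁ h₁sub) hdisj
  -- the compact set K = E₀ \ V contains C and is contained in A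
  set K : Set X := E₀ \ V with hK
  have hKclosed : IsClosed K := h₀.isClosed.sdiff hVo
  have hKcompact : IsCompact K := hKclosed.isCompact
  have hCK : C ⊆ K := fun y hy =>
    ⟨(hCsub hy).1, fun hyV => hUV.le_bot ⟨hCU hy, hyV⟩⟩
  have hKA : K ⊆ A := fun y hy => ⟨hy.1, fun hyE₁ => hy.2 (hE₁V hyE₁)⟩
  have hxK : x ∈ K := hCK hxC
  -- C is the connected component of x in K
  have hCeq : connectedComponentIn K x = C := by
    apply Subset.antisymm
    · exact isPreconnected_connectedComponentIn.subset_connectedComponentIn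
        (mem_connectedComponentIn hxK) ((connectedComponentIn_subset K x).trans hKA)
    · exact hCconn.subset_connectedComponentIn hxC hCK
  -- move to the subtype K, which is compact Hausdorff
  haveI : CompactSpace K := isCompact_iff_compactSpace.mp hKcompact
  set x' : K := ⟨x, hxK⟩ with hx'
  have himg : (Subtype.val '' connectedComponent x' : Set X) = C := by
    rw [← connectedComponentIn_eq_image hxK, hCeq]
  have hU' : IsOpen ((Subtype.val : K → X) ⁻¹' U) := hUo.preimage continuous_subtype_val
  have hsub' : connectedComponent x' ⊆ (Subtype.val : K → X) ⁻¹' U := by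
    intro y hy
    have : (y : X) ∈ C := himg ▸ mem_image_of_mem _ hy
    exact hCU this
  obtain ⟨D', hD'clopen, hcompD', hD'U⟩ :=
    exists_isClopen_of_connectedComponent_subset hU' hsub'
  set D : Set X := Subtype.val '' D' with hD
  have hxD : x ∈ D := mem_image_of_mem _ (hcompD' (mem_connectedComponent))
  have hDU : D ⊆ U := by rintro y ⟨z, hz, rfl⟩; exact hD'U hz
  have hDK : D ⊆ K := by rintro y ⟨z, hz, rfl⟩; exact z.2
  -- D is closed in X
  have hDclosed : IsClosed D := by
    have : IsCompact D := (hD'clopen.1.isCompact).image continuous_subtype_val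
    exact this.isClosed
  -- D is relatively open in E₀ : D = (O ∩ U) ∩ E₀ for some open O
  obtain ⟨O, hOo, hOeq⟩ := isOpen_induced_iff.mp hD'clopen.2
  have hDeq : D = (O ∩ U) ∩ E₀ := by
    apply Subset.antisymm
    · rintro y ⟨z, hz, rfl⟩
      have hzO : (z : X) ∈ O := by
        rw [← hOeq] at hz; exact hz
      exact ⟨⟨hzO, hD'U hz⟩, z.2.1⟩
    · rintro y ⟨⟨hyO, hyU⟩, hyE₀⟩
      have hyK : y ∈ K := ⟨hyE₀, fun hyV => hUV.le_bot ⟨hyU, hyV⟩⟩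
      refine ⟨⟨y, hyK⟩, ?_, rfl⟩
      rw [← hOeq]; exact hyO
  -- now contradict connectedness of E₀
  obtain ⟨e, heE₁⟩ := h₁ne
  have heD : e ∉ D := fun h => (hKA (hDK h)).2 heE₁
  have := h₀c.isPreconnected (O ∩ U) Dᶜ (hOo.inter hUo) hDclosed.isOpen_compl
    (fun y hy => by
      by_cases h : y ∈ D
      · left; rw [hDeq] at h; exact h.1
      · right; exact h)
    ⟨x, (hCsub hxC).1, (hDeq ▸ hxD).1⟩
    ⟨e, h₁sub heE₁, heD⟩
  obtain ⟨z, hzE₀, hzOU, hzD⟩ := this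
  exact hzD (hDeq ▸ ⟨hzOU, hzE₀⟩)
end

section
/- Let (E_j)_{j∈ℕ} be a sequence of nonempty compact subsets of ℂ, let (m_j)_{j∈ℕ} be a sequence of positive integers, and let f : ℂ → ℂ be continuous, such that E_{j+1} ⊆ f^{m_j}(E_j) for all j. Set p_k = m_0 + m_1 + ... + m_k. Then there exists a point ζ ∈ E_0 such that f^{p_k}(ζ) ∈ E_{k+1} for every k ∈ ℕ. -/
/-- Covering lemma: if compact sets satisfy `E (j+1) ⊆ f^[m j] '' (E j)`, then there is a
point of `E 0` whose orbit visits every `E (k+1)` at time `p k = m 0 + ⋯ + m k`. -/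
theorem exists_point_orbit_visits (f : ℂ → ℂ) (hf : Continuous f)
    (E : ℕ → Set ℂ) (hEc : ∀ j, IsCompact (E j)) (hEne : ∀ j, (E j).Nonempty)
    (m : ℕ → ℕ) (hm : ∀ j, 1 ≤ m j)
    (hcov : ∀ j, E (j + 1) ⊆ f^[m j] '' E j) :
    ∃ ζ ∈ E 0, ∀ k : ℕ, f^[∑ j ∈ Finset.range (k + 1), m j] ζ ∈ E (k + 1) := by
  set q : ℕ → ℕ := fun k => ∑ j ∈ Finset.range k, m j with hq
  -- backward-tracking claim
  have claim : ∀ k, ∀ z ∈ E k, ∃ w ∈ E 0, f^[q k] w = z ∧ ∀ j ≤ k, f^[q j] w ∈ E j := by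
    intro k
    induction k with
    | zero =>
      intro z hz
      exact ⟨z, hz, by simp [hq], by intro j hj; interval_cases j; simpa [hq]⟩
    | succ k ih =>
      intro z hz
      obtain ⟨y, hy, hyz⟩ := hcov k hz
      obtain ⟨w, hw0, hwy, hwall⟩ := ih y hy
      refine ⟨w, hw0, ?_, ?_⟩
      · have : q (k + 1) = m k + q k := by
          simp [hq, Finset.sum_range_succ, Nat.add_comm]
        rw [this, Function.iterate_add_apply, hwy, hyz]
      · intro j hj
        rcases Nat.lt_or_ge j (k + 1) with h | h
        · exact hwall j (Nat.lt_succ_iff.mp h)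
        · have : j = k + 1 := le_antisymm hj h
          subst this
          have hqeq : q (k + 1) = m k + q k := by
            simp [hq, Finset.sum_range_succ, Nat.add_comm]
          rw [hqeq, Function.iterate_add_apply, hwy, hyz]
          exact hz
  -- nested compact sets
  set F : ℕ → Set ℂ := fun k =>
    E 0 ∩ ⋂ j, ⋂ (_ : j ≤ k), (f^[q (j + 1)]) ⁻¹' E (j + 1) with hF
  have hFclosed : ∀ k, IsClosed (F k) := by
    intro k
    refine ((hEc 0).isClosed).inter (isClosed_iInter fun j => isClosed_iInter fun _ => ?_)
    exact (hEc (j + 1)).isClosed.preimage (hf.iterate _)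
  have hFcompact : ∀ k, IsCompact (F k) := fun k =>
    (hEc 0).of_isClosed_subset (hFclosed k) Set.inter_subset_left
  have hFne : ∀ k, (F k).Nonempty := by
    intro k
    obtain ⟨z, hz⟩ := hEne (k + 1)
    obtain ⟨w, hw0, -, hwall⟩ := claim (k + 1) z hz
    refine ⟨w, hw0, ?_⟩
    simp only [Set.mem_iInter, Set.mem_preimage]
    intro j hj
    exact hwall (j + 1) (Nat.succ_le_succ hj)
  have hFanti : ∀ k, F (k + 1) ⊆ F k := by
    intro k x hx
    obtain ⟨hx1, hx2⟩ := hx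
    refine ⟨hx1, ?_⟩
    simp only [Set.mem_iInter, Set.mem_preimage] at hx2 ⊢
    intro j hj
    exact hx2 j (hj.trans (Nat.le_succ k))
  have := IsCompact.nonempty_iInter_of_sequence_nonempty_isCompact_isClosed F hFanti hFne
    (hFcompact 0) hFclosed
  obtain ⟨ζ, hζ⟩ := this
  simp only [Set.mem_iInter] at hζ
  refine ⟨ζ, (hζ 0).1, fun k => ?_⟩
  have := (hζ k).2
  simp only [Set.mem_iInter, Set.mem_preimage] at this
  exact this k le_rfl
end

section
/- Let S ⊂ ℂ be a set with the property that for every bounded simply connected domain G ⊂ ℂ with G ∩ S ≠ ∅ one has ∂G ∩ S ≠ ∅. Then S ∪ {∞} is a connected subset of the Riemann sphere ℂ ∪ {∞}. -/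
open Set Metric OnePoint

lemma aux_isPreconnected_compl_closedBall (R : ℝ) :
    IsPreconnected ((Metric.closedBall (0:ℂ) R)ᶜ) := by
  rcases lt_or_ge R 0 with hR | hR
  · rw [Metric.closedBall_eq_empty.2 hR, compl_empty]
    exact isPreconnected_univ
  · have hrank : (1:Cardinal) < Module.rank ℝ ℂ := by
      rw [Complex.rank_real_complex]; norm_num
    have hsph : IsPreconnected (Metric.sphere (0:ℂ) 1) := isPreconnected_sphere hrank 0 1
    have hprod : IsPreconnected ((Metric.sphere (0:ℂ) 1) ×ˢ (Set.Ioi R)) :=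
      hsph.prod isPreconnected_Ioi
    have hcont : Continuous (fun p : ℂ × ℝ => p.2 • p.1) := by continuity
    have himg := hprod.image _ hcont.continuousOn
    convert himg using 1
    ext z
    simp only [mem_compl_iff, Metric.mem_closedBall, dist_zero_right, not_le, mem_image,
      Set.mem_prod, Metric.mem_sphere, dist_zero_right, mem_Ioi, Prod.exists]
    constructor
    · intro hz
      have hz0 : z ≠ 0 := by
        intro h; rw [h, norm_zero] at hz; exact absurd hz (not_lt.2 hR)
      refine ⟨‖z‖⁻¹ • z, ‖z‖, ⟨?_, hz⟩, ?_⟩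
      · rw [norm_smul, norm_inv, norm_norm, inv_mul_cancel₀ (norm_ne_zero_iff.2 hz0)]
      · rw [smul_smul, mul_inv_cancel₀ (norm_ne_zero_iff.2 hz0), one_smul]
    · rintro ⟨c, t, ⟨hc, ht⟩, rfl⟩
      rw [norm_smul, hc, mul_one, Real.norm_eq_abs, abs_of_nonneg (hR.trans ht.le)]
      exact ht

lemma aux_isClosed_connectedComponentIn {X : Type*} [TopologicalSpace X] {s : Set X}
    (hs : IsClosed s) (x : X) : IsClosed (connectedComponentIn s x) := by
  by_cases hx : x ∈ s
  · rw [connectedComponentIn_eq_image hx]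
    exact hs.isClosedEmbedding_subtypeVal.isClosedMap _ isClosed_connectedComponent
  · rw [connectedComponentIn_eq_empty hx]; exact isClosed_empty

lemma aux_mem_of_mem_closure_connectedComponentIn {X : Type*} [TopologicalSpace X]
    [LocallyConnectedSpace X] {W : Set X} (hW : IsOpen W) {y z : X} (hzW : z ∈ W)
    (hz : z ∈ closure (connectedComponentIn W y)) : z ∈ connectedComponentIn W y := by
  have hZ : IsOpen (connectedComponentIn W z) := hW.connectedComponentIn
  obtain ⟨w, hwZ, hwY⟩ := mem_closure_iff.1 hz _ hZ (mem_connectedComponentIn hzW)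
  have h1 := connectedComponentIn_eq (F := W) (x := y) hwY
  have h2 := connectedComponentIn_eq (F := W) (x := z) hwZ
  rw [h1, ← h2]
  exact mem_connectedComponentIn hzW

lemma aux_core (S : Set ℂ)
    (h : ∀ G : Set ℂ, IsOpen G → IsConnected G → Bornology.IsBounded G →
      IsConnected ((((↑) : ℂ → OnePoint ℂ) '' G)ᶜ) →
      (G ∩ S).Nonempty → (frontier G ∩ S).Nonempty)
    (A' B' : Set ℂ) (hSAB : S ⊆ A' ∪ B') (x : ℂ) (hxS : x ∈ S) (hxB : x ∈ B')
    (V₀ : Set ℂ) (hV₀open : IsOpen V₀) (hBV₀ : B' ⊆ V₀)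
    (R₁ : ℝ) (hV₀sub : V₀ ⊆ Metric.closedBall 0 R₁)
    (hclA : closure V₀ ∩ A' = ∅) : False := by
  have hcinj : Function.Injective ((↑) : ℂ → OnePoint ℂ) := OnePoint.coe_injective
  set c : ℂ → OnePoint ℂ := ((↑) : ℂ → OnePoint ℂ) with hcdef
  -- the connected component of x in V₀
  have hxV₀ : x ∈ V₀ := hBV₀ hxB
  set G₀ : Set ℂ := connectedComponentIn V₀ x with hG₀def
  have hG₀open : IsOpen G₀ := hV₀open.connectedComponentIn
  have hG₀conn : IsConnected G₀ := isConnected_connectedComponentIn_iff.2 hxV₀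
  have hG₀sub : G₀ ⊆ V₀ := connectedComponentIn_subset _ _
  -- complement of its image, and the component of ∞ therein
  set K' : Set (OnePoint ℂ) := (c '' G₀)ᶜ with hK'def
  have hK'closed : IsClosed K' := (OnePoint.isOpen_image_coe.2 hG₀open).isClosed_compl
  have hinfK' : ∞ ∈ K' := OnePoint.infty_notMem_image_coe
  set C : Set (OnePoint ℂ) := connectedComponentIn K' ∞ with hCdef
  have hCclosed : IsClosed C := aux_isClosed_connectedComponentIn hK'closed ∞
  have hCsub : C ⊆ K' := connectedComponentIn_subset _ _
  have hinfC : ∞ ∈ C := mem_connectedComponentIn hinfK'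
  have hCpre : IsPreconnected C := isPreconnected_connectedComponentIn
  -- the filled domain
  set G : Set ℂ := c ⁻¹' Cᶜ with hGdef
  have hGopen : IsOpen G := hCclosed.isOpen_compl.preimage OnePoint.continuous_coe
  have hGcomp : ∀ z : ℂ, z ∉ G ↔ c z ∈ C := by
    intro z; simp [hGdef]
  have hG₀G : G₀ ⊆ G := by
    intro z hz hzC
    exact (hCsub hzC) (mem_image_of_mem c hz)
  have himg : c '' G = Cᶜ := by
    have h1 : Cᶜ ⊆ range c := by
      intro w hw
      have hwne : w ≠ ∞ := by rintro rfl; exact hw hinfC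
      obtain ⟨z, hz⟩ := OnePoint.ne_infty_iff_exists.1 hwne
      exact ⟨z, hz⟩
    rw [hGdef, image_preimage_eq_inter_range, inter_eq_self_of_subset_left h1]
  -- boundedness of G
  have hs₁K' : c '' ((Metric.closedBall (0:ℂ) R₁)ᶜ) ⊆ K' := by
    rintro _ ⟨z, hz, rfl⟩ ⟨w, hwG₀, hwz⟩
    exact hz ((hcinj hwz) ▸ hV₀sub (hG₀sub hwG₀))
  have hinfcl : ∞ ∈ closure (c '' ((Metric.closedBall (0:ℂ) R₁)ᶜ)) := by
    rw [_root_.mem_closure_iff]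
    intro O hO hinfO
    have hcpt : IsCompact ((c ⁻¹' O)ᶜ) := ((OnePoint.isOpen_iff_of_mem hinfO).1 hO).2
    obtain ⟨R₂, hR₂⟩ :=
      (hcpt.isBounded.union (Metric.isBounded_closedBall (x := (0:ℂ)) (r := R₁))).subset_closedBall 0
    set z : ℂ := ((max R₂ R₁ + 1 : ℝ) : ℂ) with hzdef
    have hzn : ‖z‖ = |max R₂ R₁ + 1| := RCLike.norm_ofReal _
    have hnormgt : max R₂ R₁ < ‖z‖ := by
      rw [hzn]
      calc max R₂ R₁ < max R₂ R₁ + 1 := by linarith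
        _ ≤ |max R₂ R₁ + 1| := le_abs_self _
    have hz2 : z ∉ Metric.closedBall (0:ℂ) R₂ := by
      rw [mem_closedBall, dist_zero_right]
      exact not_le.2 (lt_of_le_of_lt (le_max_left _ _) hnormgt)
    have hz1 : z ∉ Metric.closedBall (0:ℂ) R₁ := by
      rw [mem_closedBall, dist_zero_right]
      exact not_le.2 (lt_of_le_of_lt (le_max_right _ _) hnormgt)
    have hzO : z ∈ c ⁻¹' O := by
      by_contra hzO
      exact hz2 (hR₂ (Or.inl hzO))
    exact ⟨c z, hzO, mem_image_of_mem c hz1⟩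
  have hinsert : insert ∞ (c '' ((Metric.closedBall (0:ℂ) R₁)ᶜ)) ⊆ C := by
    refine IsPreconnected.subset_connectedComponentIn ?_ (mem_insert _ _) ?_
    · refine IsPreconnected.subset_closure ?_ (subset_insert _ _) (insert_subset hinfcl subset_closure)
      exact (aux_isPreconnected_compl_closedBall R₁).image _ OnePoint.continuous_coe.continuousOn
    · exact insert_subset hinfK' hs₁K'
  have hGsub : G ⊆ Metric.closedBall 0 R₁ := by
    intro z hz
    by_contra hzb
    exact hz (hinsert (mem_insert_iff.2 (Or.inr (mem_image_of_mem c hzb))))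
  -- frontier of G is inside frontier of G₀
  have hfrontier : frontier G ⊆ frontier G₀ := by
    intro y hy
    rw [hGopen.frontier_eq] at hy
    obtain ⟨hycl, hyG⟩ := hy
    have hyC : c y ∈ C := (hGcomp y).1 hyG
    have hyclG₀ : y ∈ closure G₀ := by
      by_contra hncl
      rw [Metric.mem_closure_iff] at hncl
      push_neg at hncl
      obtain ⟨ε, hε, hball⟩ := hncl
      have hst : c '' (Metric.ball y ε) ⊆ K' := by
        rintro _ ⟨z, hz, rfl⟩ ⟨w, hwG₀, hwz⟩
        rw [hcinj hwz] at hwG₀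
        rw [mem_ball, dist_comm] at hz
        exact absurd (hball z hwG₀) (not_le.2 hz)
      have hupre : IsPreconnected (C ∪ c '' (Metric.ball y ε)) := by
        refine IsPreconnected.union (c y) hyC ?_ hCpre ?_
        · exact mem_image_of_mem c (mem_ball_self hε)
        · exact (convex_ball y ε).isPreconnected.image _ OnePoint.continuous_coe.continuousOn
      have hsubC : C ∪ c '' (Metric.ball y ε) ⊆ C :=
        hupre.subset_connectedComponentIn (Or.inl hinfC) (union_subset hCsub hst)
      obtain ⟨g, hgG, hgd⟩ := Metric.mem_closure_iff.1 hycl ε hε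
      have hgC : c g ∈ C := by
        refine hsubC (Or.inr (mem_image_of_mem c ?_))
        rw [mem_ball, dist_comm]; exact hgd
      exact ((hGcomp g).2 hgC) hgG
    have hyG₀ : y ∉ G₀ := fun hmem => (hCsub hyC) (mem_image_of_mem c hmem)
    rw [hG₀open.frontier_eq]
    exact ⟨hyclG₀, hyG₀⟩
  -- the frontier of G₀ misses S
  have hfrS : ∀ z ∈ frontier G₀, z ∉ S := by
    intro z hz hzS
    rw [hG₀open.frontier_eq] at hz
    obtain ⟨hzcl, hzG₀⟩ := hz
    have hzV₀ : z ∉ V₀ := fun hmem =>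
      hzG₀ (aux_mem_of_mem_closure_connectedComponentIn hV₀open hmem hzcl)
    rcases hSAB hzS with hzA | hzB
    · have : z ∈ closure V₀ ∩ A' := ⟨closure_mono hG₀sub hzcl, hzA⟩
      rw [hclA] at this
      exact this
    · exact hzV₀ (hBV₀ hzB)
  -- G is connected
  have hGx : x ∈ G := hG₀G (mem_connectedComponentIn hxV₀)
  have hGconn : IsConnected G := by
    refine ⟨⟨x, hGx⟩, isPreconnected_of_forall x ?_⟩
    intro y hyG
    refine ⟨connectedComponentIn G y, connectedComponentIn_subset _ _, ?_,
      mem_connectedComponentIn hyG, isPreconnected_connectedComponentIn⟩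
    by_cases hmeet : (connectedComponentIn G y ∩ G₀).Nonempty
    · obtain ⟨w, hwY, hwG₀⟩ := hmeet
      have h1 : G₀ ⊆ connectedComponentIn G w :=
        hG₀conn.isPreconnected.subset_connectedComponentIn hwG₀ hG₀G
      rw [← connectedComponentIn_eq hwY] at h1
      exact h1 (mem_connectedComponentIn hxV₀)
    · exfalso
      rw [not_nonempty_iff_eq_empty] at hmeet
      have hyGy : y ∈ connectedComponentIn G y := mem_connectedComponentIn hyG
      have hGyopen : IsOpen (connectedComponentIn G y) := hGopen.connectedComponentIn
      have hGysub : connectedComponentIn G y ⊆ G := connectedComponentIn_subset _ _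
      have hGyK' : c '' (connectedComponentIn G y) ⊆ K' := by
        rintro _ ⟨z, hz, rfl⟩ ⟨w, hwG₀, hwz⟩
        rw [hcinj hwz] at hwG₀
        have : z ∈ connectedComponentIn G y ∩ G₀ := ⟨hz, hwG₀⟩
        rw [hmeet] at this
        exact this
      have hcyK' : c y ∈ K' := hGyK' (mem_image_of_mem c hyGy)
      have hEclosed : IsClosed (connectedComponentIn K' (c y)) :=
        aux_isClosed_connectedComponentIn hK'closed _
      have hGyE : c '' (connectedComponentIn G y) ⊆ connectedComponentIn K' (c y) := by
        refine IsPreconnected.subset_connectedComponentIn ?_ (mem_image_of_mem c hyGy) hGyK'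
        exact isPreconnected_connectedComponentIn.image _ OnePoint.continuous_coe.continuousOn
      have hEC : ∀ w ∈ connectedComponentIn K' (c y), w ∉ C := by
        intro w hwE hwC
        have h1 := connectedComponentIn_eq hwE
        have h2 := connectedComponentIn_eq (F := K') (x := ∞) hwC
        have hcyC : c y ∈ C := by
          rw [hCdef, h2, ← h1]
          exact mem_connectedComponentIn hcyK'
        exact ((hGcomp y).2 hcyC) hyG
      have hfrGy : ∀ z ∈ frontier (connectedComponentIn G y), c z ∈ C := by
        intro z hz
        rw [hGyopen.frontier_eq] at hz
        obtain ⟨hzcl, hzGy⟩ := hz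
        have hzG : z ∉ G := fun hzG =>
          hzGy (aux_mem_of_mem_closure_connectedComponentIn hGopen hzG hzcl)
        exact (hGcomp z).1 hzG
      have hclGyE : ∀ z ∈ closure (connectedComponentIn G y),
          c z ∈ connectedComponentIn K' (c y) := by
        intro z hz
        have h1 : c z ∈ closure (c '' (connectedComponentIn G y)) :=
          (image_closure_subset_closure_image OnePoint.continuous_coe) (mem_image_of_mem c hz)
        exact (hEclosed.closure_subset_iff.2 hGyE) h1
      have hfrempty : frontier (connectedComponentIn G y) = ∅ := by
        rw [eq_empty_iff_forall_notMem]
        intro z hz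
        exact hEC (c z) (hclGyE z (frontier_subset_closure hz)) (hfrGy z hz)
      have huniv : connectedComponentIn G y = univ :=
        (isClopen_iff_frontier_eq_empty.2 hfrempty).eq_univ ⟨y, hyGy⟩
      have hmem : ((|R₁| + 1 : ℝ) : ℂ) ∈ G := hGysub (huniv ▸ mem_univ _)
      have hle := hGsub hmem
      rw [mem_closedBall, dist_zero_right] at hle
      have hn : ‖((|R₁| + 1 : ℝ) : ℂ)‖ = |(|R₁| + 1)| := RCLike.norm_ofReal _
      rw [hn] at hle
      have : |R₁| + 1 ≤ |R₁| := le_trans (le_abs_self _) (le_trans hle (le_abs_self _))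
      linarith
  -- apply the hypothesis and contradict
  have hcompl : IsConnected ((c '' G)ᶜ) := by
    rw [himg, compl_compl]
    exact ⟨⟨∞, hinfC⟩, hCpre⟩
  have hGbdd : Bornology.IsBounded G := Metric.isBounded_closedBall.subset hGsub
  obtain ⟨z, hzfr, hzS⟩ := h G hGopen hGconn hGbdd hcompl ⟨x, hGx, hxS⟩
  exact hfrS z (hfrontier hzfr) hzS


lemma aux_main (S : Set ℂ)
    (h : ∀ G : Set ℂ, IsOpen G → IsConnected G → Bornology.IsBounded G →
      IsConnected ((((↑) : ℂ → OnePoint ℂ) '' G)ᶜ) →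
      (G ∩ S).Nonempty → (frontier G ∩ S).Nonempty)
    (U V : Set (OnePoint ℂ)) (hU : IsOpen U) (hV : IsOpen V)
    (hcov : ((((↑) : ℂ → OnePoint ℂ) '' S) ∪ {∞}) ⊆ U ∪ V)
    (hdisj : ((((↑) : ℂ → OnePoint ℂ) '' S) ∪ {∞}) ∩ (U ∩ V) = ∅)
    (hinfU : ∞ ∈ U)
    (hVne : (((((↑) : ℂ → OnePoint ℂ) '' S) ∪ {∞}) ∩ V).Nonempty) : False := by
  set c : ℂ → OnePoint ℂ := ((↑) : ℂ → OnePoint ℂ) with hcdef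
  have hinfT : ∞ ∈ (c '' S) ∪ {∞} := Or.inr rfl
  have hinfV : ∞ ∉ V := fun hv =>
    (eq_empty_iff_forall_notMem.1 hdisj ∞) ⟨hinfT, hinfU, hv⟩
  obtain ⟨y, hyT, hyV⟩ := hVne
  have hyne : y ≠ ∞ := fun he => hinfV (he ▸ hyV)
  obtain ⟨x, hxS, hxy⟩ : ∃ x ∈ S, c x = y := by
    rcases hyT with hyS | hyinf
    · exact hyS
    · exact absurd hyinf hyne
  set A' : Set ℂ := S ∩ c ⁻¹' U with hA'def
  set B' : Set ℂ := S ∩ c ⁻¹' V with hB'def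
  have hxB : x ∈ B' := ⟨hxS, by rw [mem_preimage, hxy]; exact hyV⟩
  have hSAB : S ⊆ A' ∪ B' := by
    intro z hz
    rcases hcov (Or.inl (mem_image_of_mem c hz)) with h1 | h2
    · exact Or.inl ⟨hz, h1⟩
    · exact Or.inr ⟨hz, h2⟩
  have hUB : ∀ b ∈ B', c b ∉ U := fun b hb hU' =>
    (eq_empty_iff_forall_notMem.1 hdisj (c b)) ⟨Or.inl (mem_image_of_mem c hb.1), hU', hb.2⟩
  have hVA : ∀ a ∈ A', c a ∉ V := fun a ha hV' =>
    (eq_empty_iff_forall_notMem.1 hdisj (c a)) ⟨Or.inl (mem_image_of_mem c ha.1), ha.2, hV'⟩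
  have hclBA : ∀ b ∈ B', b ∉ closure A' := by
    intro b hb hbcl
    have hmem : c b ∈ closure (c '' A') :=
      (image_closure_subset_closure_image OnePoint.continuous_coe) (mem_image_of_mem c hbcl)
    obtain ⟨w, hwV, a, haA, rfl⟩ := _root_.mem_closure_iff.1 hmem V hV hb.2
    exact hVA a haA hwV
  have hclAB : ∀ a ∈ A', a ∉ closure B' := by
    intro a ha hacl
    have hmem : c a ∈ closure (c '' B') :=
      (image_closure_subset_closure_image OnePoint.continuous_coe) (mem_image_of_mem c hacl)
    obtain ⟨w, hwU, b, hbB, rfl⟩ := _root_.mem_closure_iff.1 hmem U hU ha.2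
    exact hUB b hbB hwU
  -- B' is bounded
  have hinfncl : ∞ ∉ closure (c '' B') := by
    intro hcl
    obtain ⟨w, hwU, b, hbB, rfl⟩ := _root_.mem_closure_iff.1 hcl U hU hinfU
    exact hUB b hbB hwU
  have hclsub : closure (c '' B') ⊆ range c := by
    intro w hw
    by_contra hwr
    rw [OnePoint.notMem_range_coe_iff] at hwr
    exact hinfncl (hwr ▸ hw)
  have hK₀cpt : IsCompact (c ⁻¹' (closure (c '' B'))) := by
    rw [OnePoint.isOpenEmbedding_coe.isEmbedding.isCompact_iff]
    rw [image_preimage_eq_inter_range, inter_eq_self_of_subset_left hclsub]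
    exact isClosed_closure.isCompact
  obtain ⟨R, hRball⟩ := hK₀cpt.isBounded.subset_closedBall 0
  have hBball : B' ⊆ Metric.closedBall 0 R := fun b hb =>
    hRball (by exact subset_closure (mem_image_of_mem c hb))
  have hBball' : B' ⊆ Metric.ball 0 (R + 1) := fun b hb => by
    have := hBball hb
    rw [mem_closedBall] at this
    rw [mem_ball]
    linarith
  by_cases hA : A'.Nonempty
  · -- separate metrically
    refine aux_core S h A' B' hSAB x hxS hxB
      ({z : ℂ | infDist z B' < infDist z A'} ∩ Metric.ball 0 (R + 1))
      ((isOpen_lt (continuous_infDist_pt B') (continuous_infDist_pt A')).inter isOpen_ball)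
      ?_ (R + 1) ((inter_subset_right).trans ball_subset_closedBall) ?_
    · intro b hb
      refine ⟨?_, hBball' hb⟩
      have h0 : infDist b B' = 0 := infDist_zero_of_mem hb
      have hpos : 0 < infDist b A' := by
        have := (isClosed_closure.notMem_iff_infDist_pos hA.closure).1 (hclBA b hb)
        rwa [Metric.infDist_closure] at this
      simpa [h0] using hpos
    · rw [eq_empty_iff_forall_notMem]
      rintro a ⟨hacl, haA⟩
      have hsub : closure ({z : ℂ | infDist z B' < infDist z A'} ∩ Metric.ball 0 (R + 1)) ⊆
          {z : ℂ | infDist z B' ≤ infDist z A'} := by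
        apply closure_minimal
        · exact fun z hz => (le_of_lt hz.1 : infDist z B' ≤ infDist z A')
        · exact isClosed_le (continuous_infDist_pt B') (continuous_infDist_pt A')
      have hle := hsub hacl
      have h0 : infDist a A' = 0 := infDist_zero_of_mem haA
      have hpos : 0 < infDist a B' := by
        have := (isClosed_closure.notMem_iff_infDist_pos (Set.Nonempty.closure ⟨x, hxB⟩)).1 (hclAB a haA)
        rwa [Metric.infDist_closure] at this
      have hle' : infDist a B' ≤ infDist a A' := hle
      rw [h0] at hle'
      exact absurd hle' (not_le.2 hpos)
  · refine aux_core S h A' B' hSAB x hxS hxB (Metric.ball 0 (R + 1)) isOpen_ball hBball'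
      (R + 1) ball_subset_closedBall ?_
    rw [not_nonempty_iff_eq_empty.1 hA, inter_empty]

open OnePoint in
/-- If every bounded simply connected domain meeting `S` has boundary meeting `S`,
then `S ∪ {∞}` is connected in the Riemann sphere `ℂ ∪ {∞}`. -/
theorem union_infty_connected_of_boundary_property (S : Set ℂ)
    (h : ∀ G : Set ℂ, IsOpen G → IsConnected G → Bornology.IsBounded G →
      IsConnected ((((↑) : ℂ → OnePoint ℂ) '' G)ᶜ) →
      (G ∩ S).Nonempty → (frontier G ∩ S).Nonempty) :
    IsConnected ((((↑) : ℂ → OnePoint ℂ) '' S) ∪ {(∞ : OnePoint ℂ)}) := by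
  constructor
  · exact ⟨∞, Or.inr rfl⟩
  · rw [IsPreconnected]
    by_contra hpc
    push_neg at hpc
    obtain ⟨U, V, hU, hV, hcov, hUne, hVne, hdd⟩ := hpc
    have hinfT : (∞ : OnePoint ℂ) ∈ (((↑) : ℂ → OnePoint ℂ) '' S) ∪ {∞} := Or.inr rfl
    rcases hcov hinfT with hiU | hiV
    · exact aux_main S h U V hU hV hcov hdd hiU hVne
    · exact aux_main S h V U hV hU (by rwa [union_comm V U]) (by rwa [inter_comm V U]) hiV hUne
end

section
/- Let S ⊂ ℂ be such that S ∪ {∞} is connected in the Riemann sphere. Then for every bounded simply connected domain G ⊂ ℂ with G ∩ S ≠ ∅, the boundary ∂G meets S. -/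
open OnePoint in
/-- If `S ∪ {∞}` is connected in the Riemann sphere, then every bounded simply connected
domain meeting `S` has boundary meeting `S`. -/
theorem boundary_property_of_union_infty_connected (S : Set ℂ)
    (h : IsConnected ((((↑) : ℂ → OnePoint ℂ) '' S) ∪ {(∞ : OnePoint ℂ)}))
    (G : Set ℂ) (hGo : IsOpen G) (hGc : IsConnected G) (hGb : Bornology.IsBounded G)
    (hGsc : IsConnected ((((↑) : ℂ → OnePoint ℂ) '' G)ᶜ))
    (hGS : (G ∩ S).Nonempty) :
    (frontier G ∩ S).Nonempty := by
  by_contra hne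
  rw [Set.not_nonempty_iff_eq_empty] at hne
  set c : ℂ → OnePoint ℂ := (↑) with hc
  have hcemb := OnePoint.isOpenEmbedding_coe (X := ℂ)
  set u : Set (OnePoint ℂ) := c '' G with hu
  set v : Set (OnePoint ℂ) := (c '' closure G)ᶜ with hv
  have hu_open : IsOpen u := hcemb.isOpenMap _ hGo
  have hv_open : IsOpen v := by
    have hcpt : IsCompact (c '' closure G) :=
      (hGb.isCompact_closure).image OnePoint.continuous_coe
    exact hcpt.isClosed.isOpen_compl
  have hcov : (c '' S ∪ {∞}) ⊆ u ∪ v := by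
    rintro x (⟨z, hzS, rfl⟩ | hx)
    · have hz : z ∉ frontier G := fun hzf =>
        Set.eq_empty_iff_forall_notMem.mp hne z ⟨hzf, hzS⟩
      rw [hGo.frontier_eq] at hz
      by_cases hzG : z ∈ G
      · exact Or.inl ⟨z, hzG, rfl⟩
      · refine Or.inr fun ⟨w, hw, hwz⟩ => ?_
        have := OnePoint.coe_injective hwz
        subst this
        exact hz ⟨hw, hzG⟩
    · simp only [Set.mem_singleton_iff] at hx
      subst hx
      exact Or.inr (by rintro ⟨w, _, hw⟩; exact OnePoint.coe_ne_infty w hw)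
  have hne_u : ((c '' S ∪ {∞}) ∩ u).Nonempty := by
    obtain ⟨z, hzG, hzS⟩ := hGS
    exact ⟨c z, Or.inl ⟨z, hzS, rfl⟩, ⟨z, hzG, rfl⟩⟩
  have hne_v : ((c '' S ∪ {∞}) ∩ v).Nonempty :=
    ⟨∞, Or.inr rfl, by rintro ⟨w, _, hw⟩; exact OnePoint.coe_ne_infty w hw⟩
  obtain ⟨x, -, ⟨z, hzG, rfl⟩, hxv⟩ :=
    h.isPreconnected u v hu_open hv_open hcov hne_u hne_v
  exact hxv ⟨z, subset_closure hzG, rfl⟩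
end

section
/- Let E ⊂ ℂ be closed in ℂ and suppose E ∪ {∞} is connected in the Riemann sphere. Then every connected component of E is unbounded. -/
open OnePoint Set Metric Bornology in
/-- If `E ⊆ ℂ` is closed and `E ∪ {∞}` is connected in the Riemann sphere, then every
connected component of `E` is unbounded. -/
theorem components_unbounded_of_closed_union_infty_connected (E : Set ℂ)
    (hE : IsClosed E)
    (h : IsConnected ((((↑) : ℂ → OnePoint ℂ) '' E) ∪ {(∞ : OnePoint ℂ)})) :
    ∀ x ∈ E, ¬ Bornology.IsBounded (connectedComponentIn E x) := by
  intro x hx hb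
  set C := connectedComponentIn E x with hCdef
  obtain ⟨R, hCR⟩ := hb.subset_ball 0
  set K := E ∩ closedBall (0:ℂ) R with hKdef
  have hKcpt : IsCompact K := (isCompact_closedBall (0:ℂ) R).inter_left hE
  have hCsub : C ⊆ K := fun z hz => ⟨connectedComponentIn_subset E x hz,
    ball_subset_closedBall (hCR hz)⟩
  have hxK : x ∈ K := hCsub (mem_connectedComponentIn hx)
  have hCK : connectedComponentIn K x = C := by
    refine Subset.antisymm (connectedComponentIn_mono x inter_subset_left) ?_
    exact isPreconnected_connectedComponentIn.subset_connectedComponentIn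
      (mem_connectedComponentIn hx) hCsub
  haveI : CompactSpace K := isCompact_iff_compactSpace.1 hKcpt
  set x' : K := ⟨x, hxK⟩ with hx'def
  have himg : ((↑) : K → ℂ) '' connectedComponent x' = C := by
    rw [← connectedComponentIn_eq_image hxK, hCK]
  set L' : Set K := ((↑) : K → ℂ) ⁻¹' sphere (0:ℂ) R with hL'def
  have hL'closed : IsClosed L' := isClosed_sphere.preimage continuous_subtype_val
  have hdisj : L' ∩ ⋂ Z : {Z : Set K // IsClopen Z ∧ x' ∈ Z}, (Z : Set K) = ∅ := by
    rw [← connectedComponent_eq_iInter_isClopen]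
    ext z
    simp only [mem_inter_iff, mem_empty_iff_false, iff_false, not_and]
    intro hzL hzC
    have hzc : (z : ℂ) ∈ C := himg ▸ mem_image_of_mem _ hzC
    have h1 : (z : ℂ) ∈ ball (0:ℂ) R := hCR hzc
    have h2 : dist (z : ℂ) 0 = R := hzL
    rw [mem_ball] at h1
    exact absurd h2 (ne_of_lt h1)
  obtain ⟨t, ht⟩ := hL'closed.isCompact.elim_finite_subfamily_closed _
    (fun Z : {Z : Set K // IsClopen Z ∧ x' ∈ Z} => Z.2.1.1) hdisj
  set V : Set K := ⋂ Z ∈ t, (Z : Set K) with hVdef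
  have hVclopen : IsClopen V := isClopen_biInter_finset fun Z _ => Z.2.1
  have hx'V : x' ∈ V := by
    simp only [hVdef, mem_iInter]
    exact fun Z _ => Z.2.2
  have hVL : L' ∩ V = ∅ := ht
  set U : Set ℂ := ((↑) : K → ℂ) '' V with hUdef
  have hxU : x ∈ U := mem_image_of_mem _ hx'V
  have hUK : U ⊆ K := by rintro z ⟨z', _, rfl⟩; exact z'.2
  have hUcpt : IsCompact U :=
    (hVclopen.1.isCompact).image continuous_subtype_val
  have hUcl : IsClosed U := hUcpt.isClosed
  have hUsphere : ∀ z ∈ U, (z : ℂ) ∉ sphere (0:ℂ) R := by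
    rintro z ⟨z', hz', rfl⟩ hzs
    have : z' ∈ L' ∩ V := ⟨hzs, hz'⟩
    rw [hVL] at this
    exact this
  have hUball : U ⊆ ball (0:ℂ) R := by
    intro z hz
    have h1 : z ∈ closedBall (0:ℂ) R := (hUK hz).2
    have h2 : z ∉ sphere (0:ℂ) R := hUsphere z hz
    rw [mem_closedBall] at h1
    rw [mem_ball]
    rcases lt_or_eq_of_le h1 with h | h
    · exact h
    · exact absurd h h2
  -- U is open in E
  obtain ⟨W, hWopen, hWV⟩ := isOpen_induced_iff.1 hVclopen.2
  have hUW : U = W ∩ K := by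
    rw [hUdef, ← hWV, Subtype.image_preimage_coe, inter_comm]
  set O : Set ℂ := W ∩ ball (0:ℂ) R with hOdef
  have hOopen : IsOpen O := hWopen.inter isOpen_ball
  have hUOE : U = O ∩ E := by
    apply Subset.antisymm
    · intro z hz
      have hzW : z ∈ W ∩ K := hUW ▸ hz
      exact ⟨⟨hzW.1, hUball hz⟩, hzW.2.1⟩
    · rintro z ⟨⟨hzW, hzb⟩, hzE⟩
      rw [hUW]
      exact ⟨hzW, hzE, ball_subset_closedBall hzb⟩
  -- Now disconnect E ∪ {∞}
  set u : Set (OnePoint ℂ) := ((↑) : ℂ → OnePoint ℂ) '' O with hudef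
  set v : Set (OnePoint ℂ) := (((↑) : ℂ → OnePoint ℂ) '' U)ᶜ with hvdef
  have huopen : IsOpen u := isOpenMap_coe O hOopen
  have hvopen : IsOpen v := isOpen_compl_image_coe.2 ⟨hUcl, hUcpt⟩
  set A := (((↑) : ℂ → OnePoint ℂ) '' E) ∪ {(∞ : OnePoint ℂ)} with hAdef
  have hsub : A ⊆ u ∪ v := by
    rintro a (⟨z, hzE, rfl⟩ | ha)
    · by_cases hzU : z ∈ U
      · left
        exact mem_image_of_mem _ (hUOE ▸ hzU : z ∈ O ∩ E).1
      · right
        rintro ⟨w, hwU, hwz⟩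
        exact hzU (OnePoint.coe_injective hwz ▸ hwU)
    · right
      rw [mem_singleton_iff] at ha
      subst ha
      exact infty_notMem_image_coe
  have hne1 : (A ∩ u).Nonempty := by
    refine ⟨(x : OnePoint ℂ), Or.inl (mem_image_of_mem _ hx), ?_⟩
    exact mem_image_of_mem _ (hUOE ▸ hxU : x ∈ O ∩ E).1
  have hne2 : (A ∩ v).Nonempty :=
    ⟨∞, Or.inr rfl, infty_notMem_image_coe⟩
  have hempty : A ∩ (u ∩ v) = ∅ := by
    ext a
    simp only [mem_inter_iff, mem_empty_iff_false, iff_false, not_and]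
    rintro ha ⟨z, hzO, rfl⟩ hav
    have hzE : z ∈ E := by
      rcases ha with ⟨w, hwE, hwz⟩ | ha
      · exact OnePoint.coe_injective hwz ▸ hwE
      · exact absurd ha (by simp [OnePoint.coe_ne_infty])
    exact hav (mem_image_of_mem _ (hUOE ▸ (⟨hzO, hzE⟩ : z ∈ O ∩ E)))
  obtain ⟨a, ha⟩ := h.isPreconnected u v huopen hvopen hsub hne1 hne2
  rw [hempty] at ha
  exact ha
end

section
/- For the entire function f(z) = -10 z e^{-z} - z/2, there is no r > 0 such that the iterated minimum modulus m^n(r) tends to ∞ as n → ∞. -/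
/-- The minimum modulus function `m(r) = min {|f z| : |z| = r}`. -/
noncomputable def minMod (f : ℂ → ℂ) (r : ℝ) : ℝ :=
  sInf ((fun z => ‖f z‖) '' Metric.sphere (0 : ℂ) r)

lemma minMod_lt_self (s : ℝ) (hs : 4 ≤ s) :
    minMod (fun z => -10 * z * Complex.exp (-z) - z / 2) s < s := by
  have hs0 : (0:ℝ) < s := by linarith
  have hmem : (s : ℂ) ∈ Metric.sphere (0 : ℂ) s := by
    simp [abs_of_nonneg hs0.le]
  have hbdd : BddBelow ((fun z => ‖(fun z => -10 * z * Complex.exp (-z) - z / 2) z‖) '' Metric.sphere (0 : ℂ) s) := by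
    refine ⟨0, ?_⟩
    rintro x ⟨z, _, rfl⟩
    exact norm_nonneg _
  have hle : minMod (fun z => -10 * z * Complex.exp (-z) - z / 2) s ≤
      ‖-10 * (s:ℂ) * Complex.exp (-(s:ℂ)) - (s:ℂ) / 2‖ :=
    csInf_le hbdd ⟨(s : ℂ), hmem, rfl⟩
  have heq : (-10 * (s:ℂ) * Complex.exp (-(s:ℂ)) - (s:ℂ) / 2) =
      ((-10 * s * Real.exp (-s) - s / 2 : ℝ) : ℂ) := by
    push_cast [Complex.ofReal_exp]
    ring
  rw [heq, Complex.norm_real, Real.norm_eq_abs] at hle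
  have hexp : Real.exp (-s) ≤ Real.exp (-4) := Real.exp_le_exp.2 (by linarith)
  have hexp4 : Real.exp (-4) < 1 / 20 := by
    have h20 : (20:ℝ) < Real.exp 4 := by
      have h1 : (2.7182818283 : ℝ) < Real.exp 1 := Real.exp_one_gt_d9
      have h4 : Real.exp 4 = (Real.exp 1) ^ 4 := by
        rw [← Real.exp_nat_mul]; norm_num
      rw [h4]
      calc (20:ℝ) < 2.7182818283 ^ 4 := by norm_num
        _ ≤ (Real.exp 1) ^ 4 := pow_le_pow_left₀ (by norm_num) h1.le 4
    rw [Real.exp_neg, one_div]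
    exact inv_strictAnti₀ (by norm_num) h20
  have hexps : Real.exp (-s) > 0 := Real.exp_pos _
  have habs : |(-10 * s * Real.exp (-s) - s / 2 : ℝ)| < s := by
    rw [abs_lt]
    constructor <;> nlinarith
  linarith
/-- For `f z = -10 z e^{-z} - z/2`, there is no `r > 0` with `m^[n] r → ∞`. -/
theorem no_iterated_minMod_tendsto_atTop :
    ¬ ∃ r > (0 : ℝ),
      Filter.Tendsto
        (fun n : ℕ => (minMod (fun z => -10 * z * Complex.exp (-z) - z / 2))^[n] r)
        Filter.atTop Filter.atTop := by
  rintro ⟨r, _, htend⟩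
  set m := minMod (fun z => -10 * z * Complex.exp (-z) - z / 2) with hm
  obtain ⟨N, hN⟩ := (htend.eventually_ge_atTop 4).exists_forall_of_atTop
  have hdec : ∀ k, m^[N + k] r ≤ m^[N] r := by
    intro k
    induction k with
    | zero => simp
    | succ k ih =>
      have h4 : 4 ≤ m^[N + k] r := hN _ (Nat.le_add_right _ _)
      have := minMod_lt_self _ h4
      calc m^[N + (k+1)] r = m (m^[N + k] r) := by
            rw [← Nat.add_assoc, Function.iterate_succ_apply']
        _ ≤ m^[N] r := le_trans this.le ih
  obtain ⟨n, hn1, hn2⟩ := ((htend.eventually_ge_atTop (m^[N] r + 1)).and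
    (Filter.eventually_ge_atTop N)).exists
  have := hdec (n - N)
  rw [Nat.add_sub_cancel' hn2] at this
  linarith
end

section
/- Let f : ℝ → ℝ be defined by f(x) = x + cos x. Then for every x ∈ ℝ the orbit (f^n(x))_{n∈ℕ} is bounded. -/
lemma mono_cos_add : Monotone (fun t : ℝ => t + Real.cos t) := by
  have h : ∀ t : ℝ, 0 ≤ 1 - Real.sin t := fun t => by
    have := Real.sin_le_one t; linarith
  have hd : ∀ t : ℝ, HasDerivAt (fun t : ℝ => t + Real.cos t) (1 - Real.sin t) t := by
    intro t
    simpa [sub_eq_add_neg, Pi.add_def] using (hasDerivAt_id' t).add (Real.hasDerivAt_cos t)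
  exact monotone_of_deriv_nonneg
    (fun t => (hd t).differentiableAt)
    (fun t => by rw [(hd t).deriv]; exact h t)

/-- For `f x = x + cos x` on `ℝ`, every orbit is bounded. -/
theorem orbit_bounded_cos_add (x : ℝ) :
    Bornology.IsBounded (Set.range fun n : ℕ => (fun t : ℝ => t + Real.cos t)^[n] x) := by
  obtain ⟨N, hN⟩ := exists_nat_gt |x|
  set b : ℝ := Real.pi / 2 + N * Real.pi with hb
  have hpi := Real.pi_gt_three
  have hcb : Real.cos b = 0 := by
    rw [hb, Real.cos_add, Real.cos_pi_div_two, Real.sin_pi_div_two, Real.sin_nat_mul_pi]; ring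
  have hca : Real.cos (-b) = 0 := by rw [Real.cos_neg]; exact hcb
  have hxb : |x| ≤ b := by
    have : (N : ℝ) ≤ N * Real.pi := by
      nlinarith [Nat.cast_nonneg (α := ℝ) N]
    show |x| ≤ Real.pi / 2 + N * Real.pi
    linarith [Real.pi_div_two_pos.le]
  have hmem : ∀ n, (fun t : ℝ => t + Real.cos t)^[n] x ∈ Set.Icc (-b) b := by
    intro n
    induction n with
    | zero => exact abs_le.mp hxb
    | succ n ih =>
      rw [Function.iterate_succ_apply']
      constructor
      · have := mono_cos_add ih.1
        simpa [hca] using this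
      · have := mono_cos_add ih.2
        simpa [hcb] using this
  exact (Metric.isBounded_Icc (-b) b).subset (Set.range_subset_iff.mpr hmem)
end

section
/- Let f : ℂ → ℂ be continuous, and suppose there exists a sequence of bounded, simply connected domains (D_n)_{n∈ℕ} such that (a) f(∂D_n) surrounds D_{n+1} for each n (i.e., D_{n+1} lies in a bounded component of the complement of f(∂D_n)), and (b) every disc centred at 0 is contained in D_n for all sufficiently large n. Suppose further that for some j there is a continuum Γ ⊂ K(f) ∩ (ℂ \ D_{n_j}) containing a point z ∈ ∂D_{n_j} and a point z' with f^n(z') ∈ D_{n_j + n} for all n ≥ 1. Then there exists n_{j+1} > n_j and a continuum Γ' ⊆ f^{n_{j+1} - n_j}(Γ) with Γ' ⊂ K(f) ∩ (ℂ \ D_{n_{j+1}}), Γ' ∩ ∂D_{n_{j+1}} ≠ ∅, and a point w' ∈ Γ' with f^n(w') ∈ D_{n_{j+1}+n} for all n ≥ 1. -/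
/-- `A` surrounds `B` if `B` lies in a bounded connected component of `ℂ \ A`. -/
def Surrounds (A B : Set ℂ) : Prop :=
  ∃ z ∈ Aᶜ, Bornology.IsBounded (connectedComponentIn Aᶜ z) ∧
    B ⊆ connectedComponentIn Aᶜ z

/-- The set of points with bounded orbit under `f`. -/
def Kset (f : ℂ → ℂ) : Set ℂ :=
  {z : ℂ | Bornology.IsBounded (Set.range fun n : ℕ => f^[n] z)}

open Set

/-- Iterates of a point with bounded orbit have bounded orbit. -/
lemma Kset_iterate_mem (f : ℂ → ℂ) (k : ℕ) {a : ℂ} (ha : a ∈ Kset f) :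
    f^[k] a ∈ Kset f := by
  have ha' : Bornology.IsBounded (Set.range fun n : ℕ => f^[n] a) := ha
  show Bornology.IsBounded (Set.range fun n : ℕ => f^[n] (f^[k] a))
  refine Bornology.IsBounded.subset ha' ?_
  rintro _ ⟨n, rfl⟩
  refine ⟨n + k, ?_⟩
  show f^[n + k] a = f^[n] (f^[k] a)
  exact Function.iterate_add_apply f n k a

/-- The connected component of a point in a compact set is compact. -/
lemma isCompact_connectedComponentIn {F : Set ℂ} (hF : IsCompact F) (x : ℂ) :
    IsCompact (connectedComponentIn F x) := by
  by_cases hx : x ∈ F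
  · rw [connectedComponentIn_eq_image hx]
    haveI : CompactSpace F := isCompact_iff_compactSpace.mp hF
    exact (isClosed_connectedComponent.isCompact).image continuous_subtype_val
  · rw [connectedComponentIn_eq_empty hx]; exact isCompact_empty

/-- Boundary bumping: in a compact connected set `X` meeting an open set `D`, the connected
component of a point `w ∉ D` in `X \ D` reaches the frontier of `D`. -/
lemma bump (X D : Set ℂ) (hX : IsCompact X) (hXc : IsPreconnected X)
    (hD : IsOpen D) (hmeet : (X ∩ D).Nonempty) {w : ℂ} (hwX : w ∈ X) (hwD : w ∉ D) :
    (connectedComponentIn (X ∩ Dᶜ) w ∩ frontier D).Nonempty := by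
  set F : Set ℂ := X ∩ Dᶜ with hFdef
  have hwF : w ∈ F := ⟨hwX, hwD⟩
  have hFcp : IsCompact F := hX.inter_right (isClosed_compl_iff.mpr hD)
  by_contra hcon
  rw [Set.not_nonempty_iff_eq_empty] at hcon
  -- the component misses the closure of `D`
  have hCclD : connectedComponentIn F w ∩ closure D = ∅ := by
    have h1 : connectedComponentIn F w ⊆ Dᶜ :=
      (connectedComponentIn_subset F w).trans inter_subset_right
    ext x
    simp only [mem_inter_iff, mem_empty_iff_false, iff_false, not_and]
    intro hx1 hx2
    have hxfr : x ∈ frontier D := by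
      rw [hD.frontier_eq]; exact ⟨hx2, h1 hx1⟩
    have : x ∈ connectedComponentIn F w ∩ frontier D := ⟨hx1, hxfr⟩
    rw [hcon] at this; exact this
  haveI : CompactSpace F := isCompact_iff_compactSpace.mp hFcp
  set x₀ : F := ⟨w, hwF⟩ with hx₀
  have hCC : connectedComponentIn F w = (↑) '' connectedComponent x₀ :=
    connectedComponentIn_eq_image hwF
  set K' : Set F := (((↑) : F → ℂ) ⁻¹' (closure D)) with hK'
  have hK'cp : IsCompact K' :=
    (isClosed_closure.preimage continuous_subtype_val).isCompact
  have hdisj : ∀ y : F, y ∈ K' → y ∉ connectedComponent x₀ := by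
    intro y hy hmem
    have : (y : ℂ) ∈ connectedComponentIn F w ∩ closure D :=
      ⟨hCC ▸ mem_image_of_mem _ hmem, hy⟩
    rw [hCclD] at this; exact this
  have hcover : K' ⊆ ⋃ Z : {Z : Set F // IsClopen Z ∧ x₀ ∈ Z}, (↑Z)ᶜ := by
    intro y hy
    have hne := hdisj y hy
    rw [connectedComponent_eq_iInter_isClopen x₀] at hne
    simp only [mem_iInter, not_forall] at hne
    obtain ⟨Z, hZ⟩ := hne
    exact mem_iUnion.mpr ⟨Z, hZ⟩
  obtain ⟨t, ht⟩ := hK'cp.elim_finite_subcover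
    (fun Z : {Z : Set F // IsClopen Z ∧ x₀ ∈ Z} => (↑Z)ᶜ)
    (fun Z => Z.2.1.compl.isOpen) hcover
  set V : Set F := ⋂ Z ∈ t, (Z : Set F) with hV
  have hVclopen : IsClopen V := isClopen_biInter_finset fun Z _ => Z.2.1
  have hx₀V : x₀ ∈ V := mem_iInter₂.mpr fun Z _ => Z.2.2
  have hVK' : ∀ y : F, y ∈ V → y ∉ K' := by
    intro y hyV hyK'
    obtain ⟨Z, hZt, hyZ⟩ := mem_iUnion₂.mp (ht hyK')
    exact hyZ (mem_iInter₂.mp hyV Z hZt)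
  obtain ⟨O, hOopen, hOV⟩ := isOpen_induced_iff.mp hVclopen.isOpen
  set Vc : Set ℂ := ((↑) : F → ℂ) '' V with hVc
  have hVcF : Vc = F ∩ O := by
    rw [hVc, ← hOV, Subtype.image_preimage_coe]
  have hVcCompact : IsCompact Vc :=
    (hVclopen.isClosed.isCompact).image continuous_subtype_val
  have hVcclD : ∀ x ∈ Vc, x ∉ closure D := by
    rintro x ⟨y, hyV, rfl⟩ hx
    exact hVK' y hyV hx
  set O' : Set ℂ := O ∩ (closure D)ᶜ with hO'
  have hXO' : X ∩ O' = Vc := by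
    apply Subset.antisymm
    · rintro x ⟨hxX, hxO, hxclD⟩
      rw [hVcF]
      exact ⟨⟨hxX, fun hxD => hxclD (subset_closure hxD)⟩, hxO⟩
    · intro x hx
      refine ⟨(hVcF ▸ hx : x ∈ F ∩ O).1.1, (hVcF ▸ hx : x ∈ F ∩ O).2, hVcclD x hx⟩
  have hw'Vc : w ∈ Vc := ⟨x₀, hx₀V, rfl⟩
  obtain ⟨d, hdX, hdD⟩ := hmeet
  have hdVc : d ∉ Vc := by
    intro hd
    have : d ∈ F := (hVcF ▸ hd : d ∈ F ∩ O).1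
    exact this.2 hdD
  have hcontr := hXc O' Vcᶜ (hOopen.inter isClosed_closure.isOpen_compl)
    (hVcCompact.isClosed.isOpen_compl) ?_ ?_ ?_
  · obtain ⟨x, hxX, hxO', hxVc⟩ := hcontr
    exact hxVc (hXO' ▸ (⟨hxX, hxO'⟩ : x ∈ X ∩ O'))
  · intro x hxX
    by_cases hx : x ∈ Vc
    · left; exact (hXO' ▸ hx : x ∈ X ∩ O').2
    · right; exact hx
  · exact ⟨w, hwX, (hXO' ▸ hw'Vc : w ∈ X ∩ O').2⟩
  · exact ⟨d, hdX, hdVc⟩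

/-- Key induction step (Lemma 3.2): given the sequence of domains `D n` and a continuum
`Γ ⊆ K(f) \ D (n_j)` meeting `∂D (n_j)` and containing a point whose orbit runs through
the domains, there is `n_{j+1} > n_j` and a continuum `Γ' ⊆ f^[n_{j+1} - n_j] '' Γ`
with the same properties at level `n_{j+1}`. -/
theorem key_induction_step (f : ℂ → ℂ) (hf : Continuous f) (D : ℕ → Set ℂ)
    (hD : ∀ n, IsOpen (D n) ∧ IsConnected (D n) ∧ Bornology.IsBounded (D n) ∧
      IsConnected ((((↑) : ℂ → OnePoint ℂ) '' D n)ᶜ))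
    (ha : ∀ n, Surrounds (f '' frontier (D n)) (D (n + 1)))
    (hb : ∀ R > (0 : ℝ), ∃ N : ℕ, ∀ n ≥ N, Metric.ball (0 : ℂ) R ⊆ D n)
    (nj : ℕ) (Γ : Set ℂ) (hΓne : Γ.Nonempty) (hΓc : IsCompact Γ) (hΓconn : IsConnected Γ)
    (hΓsub : Γ ⊆ Kset f ∩ (D nj)ᶜ)
    (z : ℂ) (hz : z ∈ Γ ∩ frontier (D nj))
    (z' : ℂ) (hz' : z' ∈ Γ) (hz'orb : ∀ n : ℕ, 1 ≤ n → f^[n] z' ∈ D (nj + n)) :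
    ∃ n' > nj, ∃ Γ' : Set ℂ, Γ' ⊆ f^[n' - nj] '' Γ ∧ Γ'.Nonempty ∧
      IsCompact Γ' ∧ IsConnected Γ' ∧ Γ' ⊆ Kset f ∩ (D n')ᶜ ∧
      (Γ' ∩ frontier (D n')).Nonempty ∧
      ∃ w' ∈ Γ', ∀ n : ℕ, 1 ≤ n → f^[n] w' ∈ D (n' + n) := by
  classical
  obtain ⟨hzΓ, hzfr⟩ := hz
  have hzK : Bornology.IsBounded (Set.range fun n : ℕ => f^[n] z) := (hΓsub hzΓ).1
  -- the orbit of z is contained in a positive ball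
  obtain ⟨R, hRpos, hR⟩ := hzK.subset_ball_lt 0 0
  obtain ⟨N, hN⟩ := hb R hRpos
  have horb_in : ∀ p, N ≤ p → ∀ n : ℕ, f^[n] z ∈ D p := by
    intro p hp n
    exact hN p hp (hR (mem_range_self n))
  -- the "bad" predicate
  set P : ℕ → Prop := fun k => 1 ≤ k ∧ f^[k] z ∉ D (nj + k) with hP
  have hP1 : P 1 := by
    refine ⟨le_refl 1, ?_⟩
    intro hfz
    obtain ⟨p, hp, hbd, hsub⟩ := ha nj
    have h1 : f z ∈ (f '' frontier (D nj))ᶜ :=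
      connectedComponentIn_subset _ _ (hsub (by simpa using hfz))
    exact h1 (mem_image_of_mem f hzfr)
  have hbnd : ∀ k, P k → nj + k < N := by
    intro k hk
    by_contra h
    exact hk.2 (horb_in (nj + k) (by omega) k)
  have hN1 : 1 ≤ N := by have := hbnd 1 hP1; omega
  set k : ℕ := Nat.findGreatest P N with hkdef
  have hPk : P k := Nat.findGreatest_spec hN1 hP1
  have hk1 : 1 ≤ k := hPk.1
  have hkmax : ∀ j, k < j → f^[j] z ∈ D (nj + j) := by
    intro j hj
    by_contra h
    by_cases hjN : j ≤ N
    · rw [hkdef] at hj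
      exact Nat.findGreatest_is_greatest hj hjN ⟨by omega, h⟩
    · exact h (horb_in (nj + j) (by omega) j)
  -- set up the continuum
  set n' : ℕ := nj + k with hn'
  set w' : ℂ := f^[k] z with hw'
  set X : Set ℂ := f^[k] '' Γ with hX
  have hXcp : IsCompact X := hΓc.image (hf.iterate k)
  have hXconn : IsConnected X := hΓconn.image _ (hf.iterate k).continuousOn
  have hmeet : (X ∩ D n').Nonempty :=
    ⟨f^[k] z', mem_image_of_mem _ hz', hz'orb k hk1⟩
  have hw'X : w' ∈ X := mem_image_of_mem _ hzΓ
  have hw'D : w' ∉ D n' := hPk.2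
  set F : Set ℂ := X ∩ (D n')ᶜ with hF
  set Γ' : Set ℂ := connectedComponentIn F w' with hΓ'
  have hw'F : w' ∈ F := ⟨hw'X, hw'D⟩
  have hΓ'F : Γ' ⊆ F := connectedComponentIn_subset F w'
  have hfront : (Γ' ∩ frontier (D n')).Nonempty :=
    bump X (D n') hXcp hXconn.isPreconnected (hD n').1 hmeet hw'X hw'D
  have hXK : X ⊆ Kset f := by
    rintro _ ⟨a, haΓ, rfl⟩
    exact Kset_iterate_mem f k (hΓsub haΓ).1
  refine ⟨n', by omega, Γ', ?_, ⟨w', mem_connectedComponentIn hw'F⟩, ?_, ?_, ?_, hfront,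
    w', mem_connectedComponentIn hw'F, ?_⟩
  · have : n' - nj = k := by omega
    rw [this]
    exact hΓ'F.trans inter_subset_left
  · exact isCompact_connectedComponentIn (hXcp.inter_right (isClosed_compl_iff.mpr (hD n').1)) w'
  · exact isConnected_connectedComponentIn_iff.mpr hw'F
  · exact fun x hx => ⟨hXK (hΓ'F hx).1, (hΓ'F hx).2⟩
  · intro n hn
    have h1 : f^[n] w' = f^[k + n] z := by
      rw [hw', add_comm k n, Function.iterate_add_apply]
    have h2 : f^[k + n] z ∈ D (nj + (k + n)) := hkmax (k + n) (by omega)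
    rw [h1]
    have : nj + (k + n) = n' + n := by omega
    rwa [this] at h2
end

section
/- Let f : ℂ → ℂ be an entire function such that the minimum modulus m(r) = min{|f(z)| : |z| = r} satisfies m^n(r₀) → ∞ as n → ∞ for some r₀ > 0, and suppose f has a point of period 2 (a point w with f(f(w)) = w, and hence bounded orbit). Then there exists N ∈ ℕ such that, with D_n := {z : |z| < m^{n+N}(r₀)}, the image f(∂D_n) surrounds D_{n+1} for every n ≥ 0, and every disc centred at 0 is contained in D_n for all sufficiently large n. -/
lemma minMod_le (f : ℂ → ℂ) {r : ℝ} {x : ℂ} (hx : x ∈ Metric.sphere (0 : ℂ) r) :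
    minMod f r ≤ ‖f x‖ := by
  apply csInf_le
  · exact ⟨0, by rintro y ⟨z, -, rfl⟩; exact norm_nonneg _⟩
  · exact ⟨x, hx, rfl⟩

/-- If `f` is entire with `m^[n] r₀ → ∞` for some `r₀ > 0` and `f` has a point of
period 2, then for some `N`, with `D n = {z : |z| < m^[n+N] r₀}`, `f(∂ D n)` surrounds
`D (n+1)` for every `n`, and every disc centred at `0` is contained in `D n` for all
sufficiently large `n`. -/
theorem minMod_gives_surrounding_domains (f : ℂ → ℂ) (hf : Differentiable ℂ f)
    (r₀ : ℝ) (hr₀ : 0 < r₀)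
    (htend : Filter.Tendsto (fun n : ℕ => (minMod f)^[n] r₀) Filter.atTop Filter.atTop)
    (w : ℂ) (hw : f (f w) = w) :
    ∃ N : ℕ,
      (∀ n : ℕ,
        Surrounds (f '' frontier (Metric.ball (0 : ℂ) ((minMod f)^[n + N] r₀)))
          (Metric.ball (0 : ℂ) ((minMod f)^[n + 1 + N] r₀))) ∧
      ∀ R > (0 : ℝ), ∃ M : ℕ, ∀ n ≥ M,
        Metric.ball (0 : ℂ) R ⊆ Metric.ball (0 : ℂ) ((minMod f)^[n + N] r₀) := by
  -- f is not constant
  have hnc : ¬ ∃ c : ℂ, ∀ z, f z = c := by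
    rintro ⟨c, hc⟩
    have hconst : ∀ n : ℕ, 1 ≤ n → (minMod f)^[n] r₀ = ‖c‖ := by
      intro n hn
      induction n with
      | zero => omega
      | succ k ih =>
        rcases Nat.eq_or_lt_of_le hn with h1 | h1
        · have : (minMod f)^[1] r₀ = minMod f r₀ := by simp
          rw [← h1, this]
          have hne : (Metric.sphere (0 : ℂ) r₀).Nonempty :=
            NormedSpace.sphere_nonempty.2 hr₀.le
          obtain ⟨x, hx⟩ := hne
          have him : ((fun z => ‖f z‖) '' Metric.sphere (0 : ℂ) r₀)
              = {‖c‖} := by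
            apply Set.eq_singleton_iff_nonempty_unique_mem.2
            constructor
            · exact ⟨‖f x‖, ⟨x, hx, rfl⟩⟩
            · rintro y ⟨z, -, rfl⟩; simp only []; rw [hc z]
          rw [minMod, him, csInf_singleton]
        · have hk : 1 ≤ k := by omega
          have hkv := ih hk
          rw [Function.iterate_succ_apply', hkv]
          have hne : (Metric.sphere (0 : ℂ) (‖c‖)).Nonempty :=
            NormedSpace.sphere_nonempty.2 (norm_nonneg c)
          obtain ⟨x, hx⟩ := hne
          have him : ((fun z => ‖f z‖) '' Metric.sphere (0 : ℂ) (‖c‖))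
              = {‖c‖} := by
            apply Set.eq_singleton_iff_nonempty_unique_mem.2
            constructor
            · exact ⟨‖f x‖, ⟨x, hx, by simp [hc]⟩⟩
            · rintro y ⟨z, -, rfl⟩; simp only []; rw [hc z]
          rw [minMod, him, csInf_singleton]
    obtain ⟨n, hn1, hn2⟩ := (htend.eventually_gt_atTop (‖c‖)).and
      (Filter.eventually_ge_atTop 1) |>.exists
    rw [hconst n hn2] at hn1
    exact lt_irrefl _ hn1
  -- open mapping
  have hOpen : ∀ s : Set ℂ, IsOpen s → IsOpen (f '' s) := by
    have := (hf.differentiableOn.analyticOnNhd isOpen_univ).is_constant_or_isOpen isPreconnected_univ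
    rcases this with ⟨c, hc⟩ | h
    · exact absurd ⟨c, fun z => hc z (Set.mem_univ z)⟩ hnc
    · exact fun s hs => h s (Set.subset_univ s) hs
  -- choose N
  set C : ℝ := max (‖w‖) (‖f w‖) with hC
  obtain ⟨N, hN⟩ := (htend.eventually_gt_atTop C).exists_forall_of_atTop
  -- basic facts
  have hCnn : (0 : ℝ) ≤ C := le_trans (norm_nonneg w) (le_max_left _ _)
  have hpos : ∀ k, N ≤ k → 0 < (minMod f)^[k] r₀ := fun k hk =>
    lt_of_le_of_lt hCnn (hN k hk)
  have hwlt : ∀ k, N ≤ k → ‖w‖ < (minMod f)^[k] r₀ := fun k hk =>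
    lt_of_le_of_lt (le_max_left _ _) (hN k hk)
  have hfwlt : ∀ k, N ≤ k → ‖f w‖ < (minMod f)^[k] r₀ := fun k hk =>
    lt_of_le_of_lt (le_max_right _ _) (hN k hk)
  refine ⟨N, fun n => ?_, fun R hR => ?_⟩
  · -- surrounding
    set R₁ : ℝ := (minMod f)^[n + N] r₀ with hR₁
    set R₂ : ℝ := (minMod f)^[n + 1 + N] r₀ with hR₂
    have hR₁pos : 0 < R₁ := hpos _ (Nat.le_add_left N n)
    have hR₂eq : R₂ = minMod f R₁ := by
      rw [hR₂, hR₁, show n + 1 + N = (n + N) + 1 by omega, Function.iterate_succ_apply']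
    have hfr : frontier (Metric.ball (0 : ℂ) R₁) = Metric.sphere (0 : ℂ) R₁ :=
      frontier_ball 0 (ne_of_gt hR₁pos)
    rw [hfr]
    set A : Set ℂ := f '' Metric.sphere (0 : ℂ) R₁ with hA
    -- A lies outside ball of radius R₂
    have hAout : ∀ y ∈ A, R₂ ≤ ‖y‖ := by
      rintro y ⟨x, hx, rfl⟩
      rw [hR₂eq]
      exact minMod_le f hx
    have hfwA : f w ∈ Aᶜ := by
      intro hmem
      have := hAout _ hmem
      have h2 := hfwlt (n + 1 + N) (Nat.le_add_left N (n + 1))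
      rw [← hR₂] at h2
      exact absurd this (not_le.2 h2)
    refine ⟨f w, hfwA, ?_, ?_⟩
    · -- boundedness
      set u : Set ℂ := f '' Metric.ball (0 : ℂ) R₁ with hu
      set v : Set ℂ := (f '' Metric.closedBall (0 : ℂ) R₁)ᶜ with hv
      have hKc : IsCompact (f '' Metric.closedBall (0 : ℂ) R₁) :=
        (isCompact_closedBall _ _).image hf.continuous
      have huo : IsOpen u := hOpen _ Metric.isOpen_ball
      have hvo : IsOpen v := hKc.isClosed.isOpen_compl
      have hdisj : Disjoint u v := by
        rw [Set.disjoint_compl_right_iff_subset]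
        exact Set.image_mono Metric.ball_subset_closedBall
      have hsub : connectedComponentIn Aᶜ (f w) ⊆ u ∪ v := by
        intro y hy
        have hyA : y ∈ Aᶜ := connectedComponentIn_subset _ _ hy
        by_cases hyK : y ∈ f '' Metric.closedBall (0 : ℂ) R₁
        · obtain ⟨x, hx, rfl⟩ := hyK
          rcases lt_or_eq_of_le (mem_closedBall_zero_iff.1 hx) with h | h
          · exact Or.inl ⟨x, mem_ball_zero_iff.2 h, rfl⟩
          · exact absurd ⟨x, mem_sphere_zero_iff_norm.2 h, rfl⟩ hyA
        · exact Or.inr hyK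
      have hne : (connectedComponentIn Aᶜ (f w) ∩ u).Nonempty := by
        refine ⟨f w, mem_connectedComponentIn hfwA, w, ?_, rfl⟩
        exact mem_ball_zero_iff.2 (hwlt (n + N) (Nat.le_add_left N n))
      have hCu : connectedComponentIn Aᶜ (f w) ⊆ u :=
        (isPreconnected_connectedComponentIn).subset_left_of_subset_union huo hvo hdisj hsub hne
      exact hKc.isBounded.subset (hCu.trans
        (Set.image_mono Metric.ball_subset_closedBall))
    · -- ball ⊆ component
      have hball : Metric.ball (0 : ℂ) R₂ ⊆ Aᶜ := by
        intro y hy hmem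
        exact absurd (hAout _ hmem) (not_le.2 (mem_ball_zero_iff.1 hy))
      have hfwb : f w ∈ Metric.ball (0 : ℂ) R₂ :=
        mem_ball_zero_iff.2 (by
          have := hfwlt (n + 1 + N) (Nat.le_add_left N (n + 1)); rwa [← hR₂] at this)
      exact (convex_ball (0 : ℂ) R₂).isPreconnected.subset_connectedComponentIn hfwb hball
  · -- eventual containment
    obtain ⟨M, hM⟩ := (htend.eventually_ge_atTop R).exists_forall_of_atTop
    exact ⟨M, fun n hn => Metric.ball_subset_ball (hM (n + N) (le_trans hn (Nat.le_add_right n N)))⟩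
end

section
/- Let G₀ and G₁ be disjoint nonempty open subsets of ℂ, let f : ℂ → ℂ be continuous, and suppose there exist nonempty compact sets H₀ ⊂ G₀, H₁ ⊂ G₁ and for each n ≥ 2 nonempty compact sets H_n with inf{|z| : z ∈ H_n} → ∞, a compact set V, an integer k ≥ 1 with f^k(V) ⊇ H₀ ∪ H₁, and for each n ≥ 2 an integer m_n ≥ 1 with f^{m_n}(H₀) ⊇ H_n, f^{m_n}(H₁) ⊇ H_n and f^{m_n}(H_n) ⊇ H₀ ∪ H₁. Then for every infinite binary sequence s = (s₁, s₂, ...) ∈ {0,1}^ℕ there exists a point ζ_s ∈ V and an increasing sequence of integers (p_j) such that f^{p_{2j-1}}(ζ_s) ∈ H_{s_j} and f^{p_{2j}}(ζ_s) ∈ H_{j+1} for all j ≥ 1; in particular ζ_s has unbounded orbit, and if s ≠ s' then some iterate of f maps ζ_s into G_{s_j} and ζ_{s'} into G_{1-s_j} for some j. -/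
lemma visit_lemma (f : ℂ → ℂ) (hf : Continuous f) (E : ℕ → Set ℂ)
    (hc : ∀ n, IsCompact (E n)) (hne : ∀ n, (E n).Nonempty)
    (d : ℕ → ℕ) (hcov : ∀ n, E (n + 1) ⊆ f^[d n] '' E n) :
    ∃ z ∈ E 0, ∀ n, f^[∑ i ∈ Finset.range n, d i] z ∈ E n := by
  set T : ℕ → ℕ := fun n => ∑ i ∈ Finset.range n, d i with hT
  have hTsucc : ∀ n, T (n + 1) = d n + T n := by
    intro n; simp [T, Finset.sum_range_succ, Nat.add_comm]
  have hback : ∀ n, ∀ w ∈ E n, ∃ z ∈ E 0, f^[T n] z = w ∧ ∀ i ≤ n, f^[T i] z ∈ E i := by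
    intro n
    induction n with
    | zero =>
      intro w hw
      exact ⟨w, hw, rfl, fun i hi => by
        have : i = 0 := Nat.le_zero.mp hi
        subst this; simpa [T] using hw⟩
    | succ n ih =>
      intro w hw
      obtain ⟨v, hv, hvw⟩ := hcov n hw
      obtain ⟨z, hz0, hzn, hzi⟩ := ih v hv
      have hiter : f^[T (n + 1)] z = w := by
        rw [hTsucc, Function.iterate_add_apply, hzn, hvw]
      refine ⟨z, hz0, hiter, fun i hi => ?_⟩
      rcases Nat.lt_or_ge i (n + 1) with h | h
      · exact hzi i (Nat.lt_succ_iff.mp h)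
      · have : i = n + 1 := le_antisymm hi h
        subst this; rw [hiter]; exact hw
  set F : ℕ → Set ℂ := fun n => {z | ∀ i ≤ n, f^[T i] z ∈ E i} with hF
  have hFclosed : ∀ n, IsClosed (F n) := by
    intro n
    have : F n = ⋂ i ∈ Finset.range (n + 1), f^[T i] ⁻¹' E i := by
      ext z; simp [F, Nat.lt_succ_iff]
    rw [this]
    exact isClosed_biInter fun i _ => ((hc i).isClosed).preimage (hf.iterate _)
  have hFsub : ∀ n, F n ⊆ E 0 := fun n z hz => by simpa [T] using hz 0 (Nat.zero_le n)
  have hFne : ∀ n, (F n).Nonempty := by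
    intro n
    obtain ⟨w, hw⟩ := hne n
    obtain ⟨z, _, _, hzi⟩ := hback n w hw
    exact ⟨z, hzi⟩
  obtain ⟨z, hz⟩ := IsCompact.nonempty_iInter_of_sequence_nonempty_isCompact_isClosed F
    (fun n x hx i hi => hx i (hi.trans (Nat.le_succ n))) hFne
    ((hc 0).of_isClosed_subset (hFclosed 0) (hFsub 0)) hFclosed
  simp only [Set.mem_iInter] at hz
  exact ⟨z, hFsub 0 (hz 0), fun n => hz n n le_rfl⟩


/-- Symbolic-dynamics construction: given disjoint open sets `G₀, G₁`, compact sets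
`H n` (with `H 0 ⊆ G₀`, `H 1 ⊆ G₁`, and `inf {|z| : z ∈ H n} → ∞`), a compact `V` with
`f^[k] '' V ⊇ H 0 ∪ H 1`, and covering times `m n`, every binary sequence `s` codes a
point `ζ_s ∈ V` whose orbit visits `H (s j)` and `H (j+1)` at prescribed increasing
times; in particular `ζ_s` has unbounded orbit, and distinct sequences are separated by
some iterate landing in `G₀` resp. `G₁`. -/
theorem symbolic_dynamics_uncountable (f : ℂ → ℂ) (hf : Continuous f)
    (G₀ G₁ : Set ℂ) (hG₀ : IsOpen G₀) (hG₁ : IsOpen G₁)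
    (hG₀ne : G₀.Nonempty) (hG₁ne : G₁.Nonempty) (hdisj : Disjoint G₀ G₁)
    (H : ℕ → Set ℂ) (hHc : ∀ n, IsCompact (H n)) (hHne : ∀ n, (H n).Nonempty)
    (hH0 : H 0 ⊆ G₀) (hH1 : H 1 ⊆ G₁)
    (hHinf : ∀ R : ℝ, ∃ N : ℕ, ∀ n ≥ N, ∀ z ∈ H n, R ≤ ‖z‖)
    (V : Set ℂ) (hV : IsCompact V)
    (k : ℕ) (hk : 1 ≤ k) (hkV : H 0 ∪ H 1 ⊆ f^[k] '' V)
    (m : ℕ → ℕ)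
    (hm : ∀ n : ℕ, 2 ≤ n → 1 ≤ m n ∧ H n ⊆ f^[m n] '' H 0 ∧ H n ⊆ f^[m n] '' H 1 ∧
      H 0 ∪ H 1 ⊆ f^[m n] '' H n) :
    ∃ P : ℕ → ℕ, StrictMono P ∧
      ∃ Z : (ℕ → ℕ) → ℂ,
        (∀ s : ℕ → ℕ, (∀ j, 1 ≤ j → s j ≤ 1) →
          Z s ∈ V ∧
          (∀ j, 1 ≤ j → f^[P (2 * j - 1)] (Z s) ∈ H (s j) ∧
            f^[P (2 * j)] (Z s) ∈ H (j + 1)) ∧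
          ¬ Bornology.IsBounded (Set.range fun n : ℕ => f^[n] (Z s))) ∧
        ∀ s s' : ℕ → ℕ, (∀ j, 1 ≤ j → s j ≤ 1) → (∀ j, 1 ≤ j → s' j ≤ 1) →
          (∃ j, 1 ≤ j ∧ s j ≠ s' j) →
          ∃ j, 1 ≤ j ∧ s j ≠ s' j ∧
            f^[P (2 * j - 1)] (Z s) ∈ (if s j = 0 then G₀ else G₁) ∧
            f^[P (2 * j - 1)] (Z s') ∈ (if s j = 0 then G₁ else G₀) := by
  classical
  have hVne : V.Nonempty := by
    obtain ⟨w, hw⟩ := hHne 0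
    obtain ⟨v, hv, -⟩ := hkV (Set.mem_union_left _ hw)
    exact ⟨v, hv⟩
  -- step lengths
  set d : ℕ → ℕ := fun n => if n = 0 then k else m ((n + 1) / 2 + 1) with hd
  have hd0 : d 0 = k := by simp [d]
  have hdodd : ∀ j : ℕ, d (2 * j + 1) = m (j + 2) := by
    intro j
    show (if 2 * j + 1 = 0 then k else m ((2 * j + 1 + 1) / 2 + 1)) = m (j + 2)
    rw [if_neg (by omega)]
    congr 1; omega
  have hdeven : ∀ j : ℕ, 1 ≤ j → d (2 * j) = m (j + 1) := by
    intro j hj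
    show (if 2 * j = 0 then k else m ((2 * j + 1) / 2 + 1)) = m (j + 1)
    rw [if_neg (by omega)]
    congr 1; omega
  have hdpos : ∀ n, 1 ≤ d n := by
    intro n
    rcases Nat.eq_zero_or_pos n with h | h
    · subst h; rw [hd0]; exact hk
    · show 1 ≤ (if n = 0 then k else m ((n + 1) / 2 + 1))
      rw [if_neg (by omega)]
      exact (hm _ (by omega)).1
  set P : ℕ → ℕ := fun n => ∑ i ∈ Finset.range n, d i with hP
  have hPmono : StrictMono P := by
    apply strictMono_nat_of_lt_succ
    intro n
    have h1 : P (n + 1) = P n + d n := Finset.sum_range_succ d n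
    rw [h1]
    exact Nat.lt_add_of_pos_right (hdpos n)
  refine ⟨P, hPmono, ?_⟩
  -- key existence statement
  have key : ∀ s : ℕ → ℕ, (∀ j, 1 ≤ j → s j ≤ 1) →
      ∃ z, z ∈ V ∧ ∀ j, 1 ≤ j → f^[P (2 * j - 1)] z ∈ H (s j) ∧
        f^[P (2 * j)] z ∈ H (j + 1) := by
    intro s hs
    set E : ℕ → Set ℂ := fun n =>
      if n = 0 then V else if n % 2 = 1 then H (s ((n + 1) / 2)) else H (n / 2 + 1) with hE
    have hE0 : E 0 = V := by simp [E]
    have hEodd : ∀ j : ℕ, E (2 * j + 1) = H (s (j + 1)) := by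
      intro j
      show (if 2 * j + 1 = 0 then V else if (2 * j + 1) % 2 = 1 then
        H (s ((2 * j + 1 + 1) / 2)) else H ((2 * j + 1) / 2 + 1)) = H (s (j + 1))
      rw [if_neg (by omega), if_pos (by omega),
        show (2 * j + 1 + 1) / 2 = j + 1 from by omega]
    have hEeven : ∀ j : ℕ, 1 ≤ j → E (2 * j) = H (j + 1) := by
      intro j hj
      show (if 2 * j = 0 then V else if (2 * j) % 2 = 1 then
        H (s ((2 * j + 1) / 2)) else H ((2 * j) / 2 + 1)) = H (j + 1)
      rw [if_neg (by omega), if_neg (by omega),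
        show 2 * j / 2 = j from by omega]
    have hEc : ∀ n, IsCompact (E n) := by
      intro n
      show IsCompact (if n = 0 then V else if n % 2 = 1 then
        H (s ((n + 1) / 2)) else H (n / 2 + 1))
      split
      · exact hV
      · split <;> apply hHc
    have hEne : ∀ n, (E n).Nonempty := by
      intro n
      show (if n = 0 then V else if n % 2 = 1 then
        H (s ((n + 1) / 2)) else H (n / 2 + 1)).Nonempty
      split
      · exact hVne
      · split <;> apply hHne
    have hsub01 : ∀ i : ℕ, 1 ≤ i → H (s i) ⊆ H 0 ∪ H 1 := by
      intro i hi
      have := hs i hi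
      rcases Nat.le_one_iff_eq_zero_or_eq_one.mp this with h | h <;> rw [h]
      · exact Set.subset_union_left
      · exact Set.subset_union_right
    have hcov : ∀ n, E (n + 1) ⊆ f^[d n] '' E n := by
      intro n
      obtain ⟨j, hj | hj⟩ := Nat.even_or_odd' n
      · -- n = 2*j even
        subst hj
        rcases Nat.eq_zero_or_pos j with hj0 | hj0
        · subst hj0
          have h01 : E (2 * 0 + 1) = H (s (0 + 1)) := hEodd 0
          norm_num at h01 ⊢
          rw [h01, hd0, hE0]
          exact (hsub01 1 le_rfl).trans hkV
        · rw [hEodd j, hdeven j hj0, hEeven j hj0]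
          exact (hsub01 (j + 1) (by omega)).trans (hm (j + 1) (by omega)).2.2.2
      · -- n = 2*j+1 odd
        subst hj
        have h2 : 2 * j + 1 + 1 = 2 * (j + 1) := by ring
        rw [h2, hEeven (j + 1) (by omega), hdodd j, hEodd j]
        have hmle := hm (j + 2) (by omega)
        have := hs (j + 1) (by omega)
        rcases Nat.le_one_iff_eq_zero_or_eq_one.mp this with h | h <;> rw [h]
        · exact fun x hx => hmle.2.1 (by simpa using hx)
        · exact fun x hx => hmle.2.2.1 (by simpa using hx)
    obtain ⟨z, hz0, hzvis⟩ := visit_lemma f hf E hEc hEne d hcov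
    rw [hE0] at hz0
    refine ⟨z, hz0, fun j hj => ⟨?_, ?_⟩⟩
    · have h1 : 2 * j - 1 = 2 * (j - 1) + 1 := by omega
      have := hzvis (2 * j - 1)
      rw [h1, hEodd (j - 1), show j - 1 + 1 = j from by omega] at this
      rwa [h1]
    · have := hzvis (2 * j)
      rwa [hEeven j hj] at this
  set Z : (ℕ → ℕ) → ℂ := fun s =>
    if h : ∀ j, 1 ≤ j → s j ≤ 1 then (key s h).choose else 0 with hZ
  have hZspec : ∀ s (hs : ∀ j, 1 ≤ j → s j ≤ 1), Z s ∈ V ∧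
      ∀ j, 1 ≤ j → f^[P (2 * j - 1)] (Z s) ∈ H (s j) ∧ f^[P (2 * j)] (Z s) ∈ H (j + 1) := by
    intro s hs
    have : Z s = (key s hs).choose := dif_pos hs
    rw [this]
    exact (key s hs).choose_spec
  refine ⟨Z, fun s hs => ⟨(hZspec s hs).1, (hZspec s hs).2, ?_⟩, ?_⟩
  · -- unbounded orbit
    intro hb
    rw [isBounded_iff_forall_norm_le] at hb
    obtain ⟨C, hC⟩ := hb
    obtain ⟨N, hN⟩ := hHinf (C + 1)
    set j : ℕ := N + 1 with hj
    have hvis := ((hZspec s hs).2 j (by omega)).2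
    have h1 : C + 1 ≤ ‖f^[P (2 * j)] (Z s)‖ := hN (j + 1) (by omega) _ hvis
    have h2 : ‖f^[P (2 * j)] (Z s)‖ ≤ C := hC _ ⟨P (2 * j), rfl⟩
    linarith
  · -- separation
    intro s s' hs hs' ⟨j, hj1, hjne⟩
    have hvs := ((hZspec s hs).2 j hj1).1
    have hvs' := ((hZspec s' hs').2 j hj1).1
    refine ⟨j, hj1, hjne, ?_, ?_⟩
    · rcases Nat.le_one_iff_eq_zero_or_eq_one.mp (hs j hj1) with h | h
      · rw [if_pos h]; exact hH0 (by rwa [h] at hvs)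
      · rw [if_neg (by omega)]; exact hH1 (by rwa [h] at hvs)
    · rcases Nat.le_one_iff_eq_zero_or_eq_one.mp (hs j hj1) with h | h
      · have h' : s' j = 1 := by have := hs' j hj1; omega
        rw [if_pos h]; exact hH1 (by rwa [h'] at hvs')
      · have h' : s' j = 0 := by have := hs' j hj1; omega
        rw [if_neg (by omega)]; exact hH0 (by rwa [h'] at hvs')
end
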